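/- For any 0 < α ≤ 2, the function d_α(p,q) := √( (ρ(p⁻¹·q)² + ‖p⁻¹·q‖_{g,α}²) / (2α²) ), where ρ(x,y,z)=√(x²+y²) and ‖(x,y,z)‖_{g,α} = ((x²+y²)² + 4α²z²)^{1/4}, defines a homogeneous distance on the Heisenberg group ℍ¹, i.e. it is a metric, left-invariant, and satisfies d_α(δ_λ p, δ_λ q) = λ d_α(p,q). -/

import Mathlib

open Real

set_option maxHeartbeats 1000000

abbrev H : Type := ℝ × ℝ × ℝ

noncomputable section

/-- Heisenberg group law on ℝ³. -/
def hmul (p q : H) : H :=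
  (p.1 + q.1, p.2.1 + q.2.1, p.2.2 + q.2.2 + (p.1 * q.2.1 - p.2.1 * q.1) / 2)

/-- Heisenberg inverse. -/
def hinv (p : H) : H := (-p.1, -p.2.1, -p.2.2)

/-- Heisenberg dilation. -/
def hdil (l : ℝ) (p : H) : H := (l * p.1, l * p.2.1, l ^ 2 * p.2.2)

/-- Horizontal norm ρ. -/
def rho (p : H) : ℝ := Real.sqrt (p.1 ^ 2 + p.2.1 ^ 2)

/-- The gauge norm ‖·‖_{g,α}. -/
def gnorm (α : ℝ) (p : H) : ℝ :=
  ((p.1 ^ 2 + p.2.1 ^ 2) ^ 2 + 4 * α ^ 2 * p.2.2 ^ 2) ^ ((1 : ℝ) / 4)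

/-- The distance d_α. -/
def dA (α : ℝ) (p q : H) : ℝ :=
  Real.sqrt (((rho (hmul (hinv p) q)) ^ 2 + (gnorm α (hmul (hinv p) q)) ^ 2) / (2 * α ^ 2))

/- ## Auxiliary lemmas -/

/-- Triangle inequality in ℝ². -/
lemma tri2 (a b c d : ℝ) :
    Real.sqrt ((a+b)^2+(c+d)^2) ≤ Real.sqrt (a^2+c^2) + Real.sqrt (b^2+d^2) := by
  have h := norm_add_le (⟨a,c⟩ : ℂ) ⟨b,d⟩
  simpa [Complex.norm_def, Complex.normSq_apply, sq] using h

lemma rho_sq (p : H) : rho p ^ 2 = p.1 ^ 2 + p.2.1 ^ 2 :=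
  Real.sq_sqrt (by positivity)

lemma gnorm_sq (α : ℝ) (p : H) :
    gnorm α p ^ 2 = Real.sqrt ((p.1 ^ 2 + p.2.1 ^ 2) ^ 2 + 4 * α ^ 2 * p.2.2 ^ 2) := by
  rw [gnorm, ← Real.rpow_natCast (_ ^ ((1:ℝ)/4)) 2, ← Real.rpow_mul (by positivity),
    Real.sqrt_eq_rpow]
  norm_num

/-- The auxiliary gauge `f`. -/
def fA (α : ℝ) (p : H) : ℝ := Real.sqrt ((rho p ^ 2 + gnorm α p ^ 2) / 2)

lemma fA_nonneg (α : ℝ) (p : H) : 0 ≤ fA α p := Real.sqrt_nonneg _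

lemma fA_eq (α : ℝ) (p : H) :
    fA α p = Real.sqrt ((p.1 ^ 2 + p.2.1 ^ 2 +
      Real.sqrt ((p.1 ^ 2 + p.2.1 ^ 2) ^ 2 + 4 * α ^ 2 * p.2.2 ^ 2)) / 2) := by
  rw [fA, rho_sq, gnorm_sq]

/-- The core real-variable inequality. -/
lemma real_key (α x1 y1 z1 x2 y2 z2 : ℝ) (hα : 0 < α) (hα2 : α ≤ 2) :
    ((x1+x2)^2+(y1+y2)^2 +
      Real.sqrt (((x1+x2)^2+(y1+y2)^2)^2 + 4*α^2*(z1+z2+(x1*y2-y1*x2)/2)^2))/2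
    ≤ (Real.sqrt ((x1^2+y1^2 + Real.sqrt ((x1^2+y1^2)^2+4*α^2*z1^2))/2)
       + Real.sqrt ((x2^2+y2^2 + Real.sqrt ((x2^2+y2^2)^2+4*α^2*z2^2))/2))^2 := by
  have hab : (x1+x2)^2+(y1+y2)^2 = (x1^2+y1^2) + (x2^2+y2^2) + 2*(x1*x2+y1*y2) := by ring
  have harg : ((x1+x2)^2+(y1+y2)^2)^2 + 4*α^2*(z1+z2+(x1*y2-y1*x2)/2)^2
      = ((x1^2+y1^2) + (x2^2+y2^2) + 2*(x1*x2+y1*y2))^2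
        + (2*α*z1 + 2*α*z2 + α*(x1*y2-y1*x2))^2 := by ring
  have e1 : (x1^2+y1^2)^2+4*α^2*z1^2 = (x1^2+y1^2)^2+(2*α*z1)^2 := by ring
  have e2 : (x2^2+y2^2)^2+4*α^2*z2^2 = (x2^2+y2^2)^2+(2*α*z2)^2 := by ring
  rw [harg, hab, e1, e2]
  set A := x1^2+y1^2 with hAdef
  set B := x2^2+y2^2 with hBdef
  set C := x1*x2+y1*y2 with hCdef
  set D := x1*y2-y1*x2 with hDdef
  clear_value A B C D
  have hA0 : (0:ℝ) ≤ A := by rw [hAdef]; positivity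
  have hB0 : (0:ℝ) ≤ B := by rw [hBdef]; positivity
  set S1 := Real.sqrt (A^2+(2*α*z1)^2) with hS1def
  set S2 := Real.sqrt (B^2+(2*α*z2)^2) with hS2def
  clear_value S1 S2
  have hS1n : 0 ≤ S1 := hS1def ▸ Real.sqrt_nonneg _
  have hS2n : 0 ≤ S2 := hS2def ▸ Real.sqrt_nonneg _
  have hS1A : A ≤ S1 := by
    rw [hS1def]
    calc A = Real.sqrt (A^2) := (Real.sqrt_sq hA0).symm
    _ ≤ _ := Real.sqrt_le_sqrt (by linarith only [sq_nonneg (2*α*z1)])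
  have hS2B : B ≤ S2 := by
    rw [hS2def]
    calc B = Real.sqrt (B^2) := (Real.sqrt_sq hB0).symm
    _ ≤ _ := Real.sqrt_le_sqrt (by linarith only [sq_nonneg (2*α*z2)])
  set f1 := Real.sqrt ((A + S1)/2) with hf1def
  set f2 := Real.sqrt ((B + S2)/2) with hf2def
  clear_value f1 f2
  have hf1n : 0 ≤ f1 := hf1def ▸ Real.sqrt_nonneg _
  have hf2n : 0 ≤ f2 := hf2def ▸ Real.sqrt_nonneg _
  have hf1sq : f1^2 = (A+S1)/2 := by
    rw [hf1def]; exact Real.sq_sqrt (by linarith only [hA0, hS1n])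
  have hf2sq : f2^2 = (B+S2)/2 := by
    rw [hf2def]; exact Real.sq_sqrt (by linarith only [hB0, hS2n])
  have hAf1 : Real.sqrt A ≤ f1 := by
    rw [hf1def]; exact Real.sqrt_le_sqrt (by linarith only [hS1A])
  have hBf2 : Real.sqrt B ≤ f2 := by
    rw [hf2def]; exact Real.sqrt_le_sqrt (by linarith only [hS2B])
  have lag : C^2 + D^2 = A*B := by rw [hAdef, hBdef, hCdef, hDdef]; ring
  have hABn : 0 ≤ Real.sqrt (A*B) := Real.sqrt_nonneg _
  have hCb : C ≤ Real.sqrt (A*B) := by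
    calc C ≤ |C| := le_abs_self C
    _ = Real.sqrt (C^2) := (Real.sqrt_sq_eq_abs C).symm
    _ ≤ Real.sqrt (A*B) := Real.sqrt_le_sqrt (by linarith only [sq_nonneg D, lag])
  have hα4 : α^2 ≤ 4 := by
    calc α^2 ≤ 2^2 := pow_le_pow_left₀ hα.le hα2 2
    _ = 4 := by norm_num
  have hcross : Real.sqrt ((2*C)^2+(α*D)^2) ≤ 2*Real.sqrt (A*B) := by
    have hb : (2*C)^2+(α*D)^2 ≤ 2^2*(A*B) := by
      have hd : α^2*D^2 ≤ 4*D^2 := mul_le_mul_of_nonneg_right hα4 (sq_nonneg D)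
      calc (2*C)^2+(α*D)^2 = 4*C^2 + α^2*D^2 := by ring
      _ ≤ 4*C^2 + 4*D^2 := by linarith only [hd]
      _ = 2^2*(A*B) := by rw [← lag]; ring
    calc Real.sqrt ((2*C)^2+(α*D)^2) ≤ Real.sqrt (2^2*(A*B)) := Real.sqrt_le_sqrt hb
    _ = 2*Real.sqrt (A*B) := by
          rw [Real.sqrt_mul (by norm_num), Real.sqrt_sq (by norm_num)]
  have hsqAB : Real.sqrt (A*B) ≤ f1*f2 := by
    calc Real.sqrt (A*B) = Real.sqrt A * Real.sqrt B := Real.sqrt_mul hA0 B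
    _ ≤ f1*f2 := mul_le_mul hAf1 hBf2 (Real.sqrt_nonneg B) hf1n
  have htriA := tri2 (A+B) (2*C) (2*α*z1+2*α*z2) (α*D)
  have htriB := tri2 A B (2*α*z1) (2*α*z2)
  have htri : Real.sqrt ((A+B+2*C)^2 + (2*α*z1+2*α*z2+α*D)^2)
      ≤ S1 + S2 + Real.sqrt ((2*C)^2+(α*D)^2) := by
    rw [hS1def, hS2def]; linarith only [htriA, htriB]
  have hrhs : (f1+f2)^2 = f1^2 + 2*(f1*f2) + f2^2 := by ring
  rw [hrhs, hf1sq, hf2sq]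
  linarith only [htri, hcross, hCb, hsqAB]

/-- Subadditivity of `fA` with respect to the group law. -/
lemma fA_add {α : ℝ} (hα : 0 < α) (hα2 : α ≤ 2) (p q : H) :
    fA α (hmul p q) ≤ fA α p + fA α q := by
  obtain ⟨x1, y1, z1⟩ := p
  obtain ⟨x2, y2, z2⟩ := q
  have hkey := real_key α x1 y1 z1 x2 y2 z2 hα hα2
  have e1 : fA α (hmul (x1,y1,z1) (x2,y2,z2))
      = Real.sqrt (((x1+x2)^2+(y1+y2)^2 +
        Real.sqrt (((x1+x2)^2+(y1+y2)^2)^2 + 4*α^2*(z1+z2+(x1*y2-y1*x2)/2)^2))/2) := by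
    rw [fA_eq]; rfl
  have e2 : fA α ((x1,y1,z1) : H)
      = Real.sqrt ((x1^2+y1^2 + Real.sqrt ((x1^2+y1^2)^2+4*α^2*z1^2))/2) := by
    rw [fA_eq]
  have e3 : fA α ((x2,y2,z2) : H)
      = Real.sqrt ((x2^2+y2^2 + Real.sqrt ((x2^2+y2^2)^2+4*α^2*z2^2))/2) := by
    rw [fA_eq]
  rw [← e2, ← e3] at hkey
  have hsum : 0 ≤ fA α ((x1,y1,z1) : H) + fA α ((x2,y2,z2) : H) :=
    add_nonneg (fA_nonneg _ _) (fA_nonneg _ _)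
  calc fA α (hmul (x1,y1,z1) (x2,y2,z2)) ≤ Real.sqrt ((fA α ((x1,y1,z1):H) + fA α ((x2,y2,z2):H))^2) := by
        rw [e1]; exact Real.sqrt_le_sqrt hkey
  _ = _ := Real.sqrt_sq hsum

lemma fA_hinv (α : ℝ) (p : H) : fA α (hinv p) = fA α p := by
  simp [fA, rho, gnorm, hinv, neg_sq]

lemma fA_dil (α : ℝ) {l : ℝ} (hl : 0 ≤ l) (p : H) : fA α (hdil l p) = l * fA α p := by
  have h1 : (rho (hdil l p) ^ 2 + gnorm α (hdil l p) ^ 2)/2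
      = l^2 * ((rho p ^ 2 + gnorm α p ^ 2)/2) := by
    rw [rho_sq, rho_sq, gnorm_sq, gnorm_sq]
    have e : ((hdil l p).1^2+(hdil l p).2.1^2)^2 + 4*α^2*(hdil l p).2.2^2
        = (l^2)^2 * ((p.1^2+p.2.1^2)^2+4*α^2*p.2.2^2) := by
      simp [hdil]; ring
    rw [e, Real.sqrt_mul (by positivity), Real.sqrt_sq (by positivity)]
    simp [hdil]; ring
  rw [fA, h1, Real.sqrt_mul (sq_nonneg l), Real.sqrt_sq hl, fA]

lemma fA_zero (α : ℝ) : fA α ((0,0,0) : H) = 0 := by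
  simp [fA, rho, gnorm, Real.zero_rpow]

lemma fA_eq_zero {α : ℝ} (hα : 0 < α) (u : H) (h : fA α u = 0) : u = ((0,0,0) : H) := by
  have h2 : (u.1 ^ 2 + u.2.1 ^ 2 +
      Real.sqrt ((u.1 ^ 2 + u.2.1 ^ 2) ^ 2 + 4 * α ^ 2 * u.2.2 ^ 2)) / 2 = 0 := by
    have := fA_eq α u
    rw [h] at this
    have hn : 0 ≤ (u.1 ^ 2 + u.2.1 ^ 2 +
        Real.sqrt ((u.1 ^ 2 + u.2.1 ^ 2) ^ 2 + 4 * α ^ 2 * u.2.2 ^ 2)) / 2 := by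
      have := Real.sqrt_nonneg ((u.1 ^ 2 + u.2.1 ^ 2) ^ 2 + 4 * α ^ 2 * u.2.2 ^ 2)
      positivity
    have := Real.sqrt_eq_zero'.mp this.symm
    linarith
  have hsn := Real.sqrt_nonneg ((u.1 ^ 2 + u.2.1 ^ 2) ^ 2 + 4 * α ^ 2 * u.2.2 ^ 2)
  have hr0 : u.1 ^ 2 + u.2.1 ^ 2 = 0 :=
    le_antisymm (by linarith) (by positivity)
  have hx : u.1 = 0 := by
    have : u.1 ^ 2 = 0 := le_antisymm (by linarith [sq_nonneg u.2.1]) (sq_nonneg _)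
    exact sq_eq_zero_iff.mp this
  have hy : u.2.1 = 0 := by
    have : u.2.1 ^ 2 = 0 := le_antisymm (by linarith [sq_nonneg u.1]) (sq_nonneg _)
    exact sq_eq_zero_iff.mp this
  have hs0 : Real.sqrt ((u.1 ^ 2 + u.2.1 ^ 2) ^ 2 + 4 * α ^ 2 * u.2.2 ^ 2) = 0 := by
    linarith
  have harg : (u.1 ^ 2 + u.2.1 ^ 2) ^ 2 + 4 * α ^ 2 * u.2.2 ^ 2 ≤ 0 :=
    Real.sqrt_eq_zero'.mp hs0
  have h6 : α ^ 2 * u.2.2 ^ 2 = 0 := by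
    have h4 : 4 * (α ^ 2 * u.2.2 ^ 2) ≤ 0 := by linarith [sq_nonneg (u.1 ^ 2 + u.2.1 ^ 2)]
    have h5 : 0 ≤ α ^ 2 * u.2.2 ^ 2 := by positivity
    linarith
  have hz : u.2.2 = 0 := by
    rcases mul_eq_zero.mp h6 with h | h
    · exact absurd h (pow_ne_zero 2 hα.ne')
    · exact sq_eq_zero_iff.mp h
  exact Prod.ext hx (Prod.ext hy hz)

/- Group-law computations. -/

lemma hsub_self (p : H) : hmul (hinv p) p = ((0,0,0) : H) := by
  refine Prod.ext ?_ (Prod.ext ?_ ?_) <;> simp [hmul, hinv] <;> ring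

lemma hsub_symm (p q : H) : hmul (hinv q) p = hinv (hmul (hinv p) q) := by
  refine Prod.ext ?_ (Prod.ext ?_ ?_) <;> simp [hmul, hinv] <;> ring

lemma hsub_tri (p q r : H) :
    hmul (hinv p) r = hmul (hmul (hinv p) q) (hmul (hinv q) r) := by
  refine Prod.ext ?_ (Prod.ext ?_ ?_) <;> simp [hmul, hinv] <;> ring

lemma hsub_left (g p q : H) :
    hmul (hinv (hmul g p)) (hmul g q) = hmul (hinv p) q := by
  refine Prod.ext ?_ (Prod.ext ?_ ?_) <;> simp [hmul, hinv] <;> ring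

lemma hsub_dil (l : ℝ) (p q : H) :
    hmul (hinv (hdil l p)) (hdil l q) = hdil l (hmul (hinv p) q) := by
  refine Prod.ext ?_ (Prod.ext ?_ ?_) <;> simp [hmul, hinv, hdil] <;> ring

lemma dA_eq {α : ℝ} (hα : 0 < α) (p q : H) :
    dA α p q = fA α (hmul (hinv p) q) / α := by
  rw [dA, fA, ← div_div, Real.sqrt_div (by positivity), Real.sqrt_sq hα.le]

theorem stmt3 (α : ℝ) (hα : 0 < α) (hα2 : α ≤ 2) :
    (∀ p q : H, dA α p q = 0 ↔ p = q) ∧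
    (∀ p q : H, dA α p q = dA α q p) ∧
    (∀ p q r : H, dA α p r ≤ dA α p q + dA α q r) ∧
    (∀ g p q : H, dA α (hmul g p) (hmul g q) = dA α p q) ∧
    (∀ l : ℝ, 0 < l → ∀ p q : H, dA α (hdil l p) (hdil l q) = l * dA α p q) := by
  refine ⟨?_, ?_, ?_, ?_, ?_⟩
  · intro p q
    rw [dA_eq hα]
    constructor
    · intro h
      have hf : fA α (hmul (hinv p) q) = 0 := by
        field_simp at h
        simpa using h
      have h0 := fA_eq_zero hα _ hf
      have h1 : -p.1 + q.1 = 0 := congrArg Prod.fst h0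
      have h2 : -p.2.1 + q.2.1 = 0 := congrArg (fun u : H => u.2.1) h0
      have h3 : -p.2.2 + q.2.2 + (-p.1 * q.2.1 - -p.2.1 * q.1) / 2 = 0 :=
        congrArg (fun u : H => u.2.2) h0
      have hq1 : q.1 = p.1 := by linarith
      have hq2 : q.2.1 = p.2.1 := by linarith
      rw [hq1, hq2] at h3
      refine Prod.ext (by linarith) (Prod.ext (by linarith) (by linear_combination -h3))
    · rintro rfl
      rw [hsub_self, fA_zero, zero_div]
  · intro p q
    rw [dA_eq hα, dA_eq hα, hsub_symm, fA_hinv]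
  · intro p q r
    rw [dA_eq hα, dA_eq hα, dA_eq hα, hsub_tri p q r, ← add_div]
    exact (div_le_div_iff_of_pos_right hα).mpr (fA_add hα hα2 _ _)
  · intro g p q
    simp only [dA, hsub_left]
  · intro l hl p q
    rw [dA_eq hα, dA_eq hα, hsub_dil, fA_dil α hl.le, mul_div_assoc]
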